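/- For a continuous scalar function a : R → R satisfying a(t) ≤ M on alternating intervals of length at most L and a(t) ≤ -c on intervals of length at least k, with c k > M L, every solution of ė = a(t) e decays exponentially: there exist K, λ > 0 with |e(t)| ≤ K e^{-λ(t-t0)} |e(t0)| for all t ≥ t0. -/

import Mathlib

/-- scalar alternating-interval decay. If `a(t) ≤ -c` on alternating
intervals `[a_{2i}, a_{2i+1}]` of length ≥ k and `a(t) ≤ M` on intervals
`[a_{2i+1}, a_{2i+2}]` of length ≤ L, with `c k > M L`, then every solution of
`ė = a(t) e` decays exponentially, uniformly. -/
theorem stmt_17 (aa : ℝ → ℝ) (haa : Continuous aa)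
    (M L c k : ℝ) (hM : 0 < M) (hL : 0 < L) (hc : 0 < c) (hk : 0 < k)
    (p : ℤ → ℝ) (hmono : StrictMono p)
    (htop : Filter.Tendsto p Filter.atTop Filter.atTop)
    (hbot : Filter.Tendsto p Filter.atBot Filter.atBot)
    (hgood_len : ∀ i : ℤ, k ≤ p (2 * i + 1) - p (2 * i))
    (hbad_len : ∀ i : ℤ, p (2 * i + 2) - p (2 * i + 1) ≤ L)
    (hgood : ∀ i : ℤ, ∀ t ∈ Set.Icc (p (2 * i)) (p (2 * i + 1)), aa t ≤ -c)
    (hbad : ∀ i : ℤ, ∀ t ∈ Set.Icc (p (2 * i + 1)) (p (2 * i + 2)), aa t ≤ M)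
    (hrate : M * L < c * k) :
    ∃ K lam : ℝ, 0 < K ∧ 0 < lam ∧
      ∀ e : ℝ → ℝ, (∀ t, HasDerivAt e (aa t * e t) t) →
        ∀ t0 t : ℝ, t0 ≤ t →
          |e t| ≤ K * Real.exp (-lam * (t - t0)) * |e t0| := by
  set lam : ℝ := (c * k - M * L) / (k + L) with hlam_def
  have hkL : 0 < k + L := by linarith
  have hlam_pos : 0 < lam := div_pos (by linarith) hkL
  have hlam_mul : lam * (k + L) = c * k - M * L := div_mul_cancel₀ _ hkL.ne'
  have hlam_lt_c : lam < c := by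
    rw [hlam_def, div_lt_iff₀ hkL]; nlinarith
  have hkey : (c - lam) * k = (M + lam) * L := by nlinarith
  have hML : 0 ≤ (M + lam) * L := by positivity
  -- integral over good sub-interval
  have lemgood : ∀ i : ℤ, ∀ u v : ℝ, p (2*i) ≤ u → u ≤ v → v ≤ p (2*i+1) →
      (∫ s in u..v, aa s) ≤ -c * (v - u) := by
    intro i u v h1 h2 h3
    have := intervalIntegral.integral_mono_on (μ := MeasureTheory.volume) h2
      (haa.intervalIntegrable u v)
      ((continuous_const : Continuous fun _ : ℝ => -c).intervalIntegrable u v)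
      (fun x hx => hgood i x ⟨le_trans h1 hx.1, le_trans hx.2 h3⟩)
    simpa [intervalIntegral.integral_const, smul_eq_mul, mul_comm] using this
  have lembad : ∀ i : ℤ, ∀ u v : ℝ, p (2*i+1) ≤ u → u ≤ v → v ≤ p (2*i+2) →
      (∫ s in u..v, aa s) ≤ M * (v - u) := by
    intro i u v h1 h2 h3
    have := intervalIntegral.integral_mono_on (μ := MeasureTheory.volume) h2
      (haa.intervalIntegrable u v)
      ((continuous_const : Continuous fun _ : ℝ => M).intervalIntegrable u v)
      (fun x hx => hbad i x ⟨le_trans h1 hx.1, le_trans hx.2 h3⟩)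
    simpa [intervalIntegral.integral_const, smul_eq_mul, mul_comm] using this
  -- single-period partial bound
  have lemE : ∀ i : ℤ, ∀ u v : ℝ, p (2*i) ≤ u → u ≤ v → v ≤ p (2*i+2) →
      (∫ s in u..v, aa s) ≤ -lam * (v - u) + (M + lam) * L := by
    intro i u v h1 h2 h3
    rcases le_or_gt v (p (2*i+1)) with hv | hv
    · have := lemgood i u v h1 h2 hv
      nlinarith [mul_le_mul_of_nonneg_right hlam_lt_c.le (sub_nonneg.mpr h2)]
    · rcases le_or_gt (p (2*i+1)) u with hu | hu
      · have := lembad i u v hu h2 h3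
        have hlen : v - u ≤ L := by nlinarith [hbad_len i]
        nlinarith
      · have hmid1 : u ≤ p (2*i+1) := hu.le
        have hmid2 : p (2*i+1) ≤ v := hv.le
        have hsplit : (∫ s in u..v, aa s) =
            (∫ s in u..p (2*i+1), aa s) + ∫ s in p (2*i+1)..v, aa s :=
          (intervalIntegral.integral_add_adjacent_intervals
            (haa.intervalIntegrable _ _) (haa.intervalIntegrable _ _)).symm
        have hA := lemgood i u (p (2*i+1)) h1 hmid1 le_rfl
        have hB := lembad i (p (2*i+1)) v le_rfl hmid2 h3
        have hlen : v - p (2*i+1) ≤ L := by nlinarith [hbad_len i]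
        rw [hsplit]
        nlinarith [mul_le_mul_of_nonneg_right hlam_lt_c.le (sub_nonneg.mpr hmid1),
          mul_le_mul_of_nonneg_left hlen (by linarith : (0:ℝ) ≤ M + lam)]
  -- full period bound
  have lemC : ∀ i : ℤ, (∫ s in p (2*i)..p (2*i+2), aa s) ≤ -lam * (p (2*i+2) - p (2*i)) := by
    intro i
    have hmid1 : p (2*i) ≤ p (2*i+1) := (hmono (by linarith)).le
    have hmid2 : p (2*i+1) ≤ p (2*i+2) := (hmono (by linarith)).le
    have hsplit : (∫ s in p (2*i)..p (2*i+2), aa s) =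
        (∫ s in p (2*i)..p (2*i+1), aa s) + ∫ s in p (2*i+1)..p (2*i+2), aa s :=
      (intervalIntegral.integral_add_adjacent_intervals
        (haa.intervalIntegrable _ _) (haa.intervalIntegrable _ _)).symm
    have hA := lemgood i (p (2*i)) (p (2*i+1)) le_rfl hmid1 le_rfl
    have hB := lembad i (p (2*i+1)) (p (2*i+2)) le_rfl hmid2 le_rfl
    have hg := hgood_len i
    have hb := hbad_len i
    rw [hsplit]
    nlinarith [mul_le_mul_of_nonneg_left hg (by linarith : (0:ℝ) ≤ c - lam),
      mul_le_mul_of_nonneg_left hb (by linarith : (0:ℝ) ≤ M + lam)]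
  -- iterated full periods
  have lemD : ∀ n : ℕ, ∀ j : ℤ, (∫ s in p (2*j)..p (2*j + 2*n), aa s) ≤
      -lam * (p (2*j + 2*n) - p (2*j)) := by
    intro n
    induction n with
    | zero => intro j; simp
    | succ n ih =>
      intro j
      have harg : (2*j + 2*((n:ℤ)+1)) = (2*(j + n) + 2) := by ring
      have harg2 : (2*j + 2*(n:ℤ)) = 2*(j+n) := by ring
      push_cast [harg]
      have hsplit : (∫ s in p (2*j)..p (2*(j+n)+2), aa s) =
          (∫ s in p (2*j)..p (2*(j+n)), aa s) + ∫ s in p (2*(j+n))..p (2*(j+n)+2), aa s :=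
        (intervalIntegral.integral_add_adjacent_intervals
          (haa.intervalIntegrable _ _) (haa.intervalIntegrable _ _)).symm
      have ih' := ih j
      rw [harg2] at ih'
      have hC := lemC (j+n)
      rw [hsplit]
      linarith
  -- global integral bound
  have main : ∀ t0 t : ℝ, t0 ≤ t →
      (∫ s in t0..t, aa s) ≤ -lam * (t - t0) + 2 * ((M + lam) * L) := by
    intro t0 t ht
    obtain ⟨i0, hi0, hi0max⟩ : ∃ i0 : ℤ, p (2*i0) ≤ t0 ∧ ∀ z : ℤ, p (2*z) ≤ t0 → z ≤ i0 := by
      obtain ⟨N, hN⟩ := (Filter.eventually_atBot).mp (hbot.eventually (Filter.eventually_le_atBot t0))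
      obtain ⟨N', hN'⟩ := (Filter.eventually_atTop).mp (htop.eventually_gt_atTop t0)
      have hbdd : ∃ b : ℤ, ∀ z : ℤ, p (2*z) ≤ t0 → z ≤ b := by
        refine ⟨(N'.natAbs : ℤ), fun z hz => ?_⟩
        by_contra h
        push_neg at h
        have : t0 < p (2*z) := hN' (2*z) (by omega)
        linarith
      have hinh : ∃ z : ℤ, p (2*z) ≤ t0 := ⟨-(N.natAbs : ℤ), hN _ (by omega)⟩
      obtain ⟨lub, h1, h2⟩ := Int.exists_greatest_of_bdd hbdd hinh
      exact ⟨lub, h1, h2⟩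
    obtain ⟨j0, hj0, hj0min⟩ : ∃ j0 : ℤ, t ≤ p (2*j0) ∧ ∀ z : ℤ, t ≤ p (2*z) → j0 ≤ z := by
      obtain ⟨N, hN⟩ := (Filter.eventually_atTop).mp (htop.eventually (Filter.eventually_ge_atTop t))
      obtain ⟨N', hN'⟩ := (Filter.eventually_atBot).mp (hbot.eventually_lt_atBot t)
      have hbdd : ∃ b : ℤ, ∀ z : ℤ, t ≤ p (2*z) → b ≤ z := by
        refine ⟨-(N'.natAbs : ℤ), fun z hz => ?_⟩
        by_contra h
        push_neg at h
        have : p (2*z) < t := hN' (2*z) (by omega)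
        linarith
      have hinh : ∃ z : ℤ, t ≤ p (2*z) := ⟨(N.natAbs : ℤ), hN _ (by omega)⟩
      obtain ⟨lub, h1, h2⟩ := Int.exists_least_of_bdd hbdd hinh
      exact ⟨lub, h1, h2⟩
    have ht0lt : t0 < p (2*i0+2) := by
      by_contra h
      push_neg at h
      have := hi0max (i0+1) (by rw [show 2*(i0+1) = 2*i0+2 by ring]; exact h)
      omega
    by_cases hcase : t ≤ p (2*i0+2)
    · have := lemE i0 t0 t hi0 ht hcase
      linarith
    · push_neg at hcase
      have hj0ge : i0 + 2 ≤ j0 := by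
        by_contra h
        push_neg at h
        have h2j : (2*j0 : ℤ) ≤ 2*i0+2 := by omega
        have : p (2*j0) ≤ p (2*i0+2) := hmono.monotone h2j
        linarith
      have h2 : p (2*(j0-1)) < t := by
        by_contra h
        push_neg at h
        have := hj0min (j0-1) h
        omega
      have h3 : t ≤ p (2*(j0-1)+2) := by rw [show 2*(j0-1)+2 = 2*j0 by ring]; exact hj0
      have h4 : p (2*i0+2) ≤ p (2*(j0-1)) := hmono.monotone (by omega)
      have hsplit1 : (∫ s in t0..t, aa s) =
          (∫ s in t0..p (2*i0+2), aa s) + ∫ s in p (2*i0+2)..t, aa s :=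
        (intervalIntegral.integral_add_adjacent_intervals
          (haa.intervalIntegrable _ _) (haa.intervalIntegrable _ _)).symm
      have hsplit2 : (∫ s in p (2*i0+2)..t, aa s) =
          (∫ s in p (2*i0+2)..p (2*(j0-1)), aa s) + ∫ s in p (2*(j0-1))..t, aa s :=
        (intervalIntegral.integral_add_adjacent_intervals
          (haa.intervalIntegrable _ _) (haa.intervalIntegrable _ _)).symm
      have hhead := lemE i0 t0 (p (2*i0+2)) hi0 ht0lt.le le_rfl
      have htail := lemE (j0-1) (p (2*(j0-1))) t le_rfl h2.le h3
      have hmid : (∫ s in p (2*i0+2)..p (2*(j0-1)), aa s) ≤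
          -lam * (p (2*(j0-1)) - p (2*i0+2)) := by
        have hn : ((j0 - i0 - 2).toNat : ℤ) = j0 - i0 - 2 := Int.toNat_of_nonneg (by omega)
        have := lemD (j0 - i0 - 2).toNat (i0+1)
        rw [show 2*(i0+1) + 2*((j0 - i0 - 2).toNat : ℤ) = 2*(j0-1) by omega,
          show 2*(i0+1) = 2*i0+2 by ring] at this
        exact this
      rw [hsplit1, hsplit2]
      linarith
  -- solution formula
  have sol : ∀ e : ℝ → ℝ, (∀ t, HasDerivAt e (aa t * e t) t) →
      ∀ t0 t : ℝ, e t = e t0 * Real.exp (∫ s in t0..t, aa s) := by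
    intro e he t0 t
    set F : ℝ → ℝ := fun u => ∫ s in t0..u, aa s with hF
    have hF' : ∀ u, HasDerivAt F (aa u) u := fun u =>
      intervalIntegral.integral_hasDerivAt_right (haa.intervalIntegrable t0 u)
        (haa.stronglyMeasurableAtFilter _ _) haa.continuousAt
    set g : ℝ → ℝ := fun u => e u * Real.exp (-F u) with hg
    have hg' : ∀ u, HasDerivAt g 0 u := by
      intro u
      have h1 : HasDerivAt (fun x => Real.exp (-F x)) (Real.exp (-F u) * (-aa u)) u := by
        have := (Real.hasDerivAt_exp (-F u)).comp u ((hF' u).neg)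
        simpa [Function.comp_def] using this
      have := (he u).mul h1
      have h0 : aa u * e u * Real.exp (-F u) + e u * (Real.exp (-F u) * -aa u) = 0 := by ring
      rw [h0] at this
      exact this
    have hconst : g t = g t0 := by
      have : ∀ x y : ℝ, g x = g y :=
        is_const_of_deriv_eq_zero (fun u => (hg' u).differentiableAt)
          (fun u => (hg' u).deriv)
      exact this t t0
    have hFt0 : F t0 = 0 := intervalIntegral.integral_same
    have hstep : e t * Real.exp (-F t) = e t0 := by
      simpa [hg, hFt0] using hconst
    have := congrArg (· * Real.exp (F t)) hstep
    rw [mul_assoc, ← Real.exp_add] at this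
    simpa using this
  -- conclusion
  refine ⟨Real.exp (2 * ((M + lam) * L)), lam, Real.exp_pos _, hlam_pos, ?_⟩
  intro e he t0 t ht
  have hsol := sol e he t0 t
  have habs : |e t| = |e t0| * Real.exp (∫ s in t0..t, aa s) := by
    rw [hsol, abs_mul, abs_of_pos (Real.exp_pos _)]
  rw [habs]
  have hexp : Real.exp (∫ s in t0..t, aa s) ≤
      Real.exp (-lam * (t - t0) + 2 * ((M + lam) * L)) :=
    Real.exp_le_exp.mpr (main t0 t ht)
  calc |e t0| * Real.exp (∫ s in t0..t, aa s)
      ≤ |e t0| * Real.exp (-lam * (t - t0) + 2 * ((M + lam) * L)) := by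
        exact mul_le_mul_of_nonneg_left hexp (abs_nonneg _)
    _ = Real.exp (2 * ((M + lam) * L)) * Real.exp (-lam * (t - t0)) * |e t0| := by
        rw [Real.exp_add]; ring
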